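/- (Scalar case.) Suppose K = 1, so that each payoff g_{ij} is a real number and v(p,q) ∈ ℝ. If p̄ ∈ P is a minimal strategy, then p̄ is a minimax strategy, i.e. max_{q∈Q} v(p̄,q) = min_{p∈P} max_{q∈Q} v(p,q); equivalently, V_I(p̄) = min_{p∈P} max_{q∈Q} v(p,q) − ℝ_+. -/

import Mathlib

open Set

noncomputable section

/-- The mixed-strategy simplex in `ℝ^m`. -/
def simplex (m : ℕ) : Set (Fin m → ℝ) := {p | (∀ i, 0 ≤ p i) ∧ ∑ i, p i = 1}

/-- Expected scalar payoff `v(p,q) = Σ_i Σ_j p_i g_{ij} q_j` (case `K = 1`). -/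
def payoffR {m n : ℕ} (g : Fin m → Fin n → ℝ) (p : Fin m → ℝ) (q : Fin n → ℝ) : ℝ :=
  ∑ i, ∑ j, p i * g i j * q j

/-- `v_I(p) = {v(p,q) : q ∈ Q}` (scalar case). -/
def vIR {m n : ℕ} (g : Fin m → Fin n → ℝ) (p : Fin m → ℝ) : Set ℝ :=
  {t | ∃ q ∈ simplex n, t = payoffR g p q}

/-- `V_I(p) = v_I(p) - ℝ_+` (scalar case). -/
def VIR {m n : ℕ} (g : Fin m → Fin n → ℝ) (p : Fin m → ℝ) : Set ℝ :=
  {y | ∃ z ∈ vIR g p, y ≤ z}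

/-- `p̄` is a minimal strategy (scalar case). -/
def MinimalStratR {m n : ℕ} (g : Fin m → Fin n → ℝ) (pbar : Fin m → ℝ) : Prop :=
  ∀ p ∈ simplex m, VIR g p ⊆ VIR g pbar → VIR g p = VIR g pbar

lemma payoffR_eq {m n : ℕ} (g : Fin m → Fin n → ℝ) (p : Fin m → ℝ) (q : Fin n → ℝ) :
    payoffR g p q = ∑ j, (∑ i, p i * g i j) * q j := by
  rw [payoffR, Finset.sum_comm]
  simp [Finset.sum_mul]

lemma vIR_isGreatest {m n : ℕ} (hn : 0 < n) (g : Fin m → Fin n → ℝ) (p : Fin m → ℝ) :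
    ∃ t, IsGreatest (vIR g p) t := by
  set c : Fin n → ℝ := fun j => ∑ i, p i * g i j with hc
  obtain ⟨j0, _, hj0⟩ := Finset.exists_max_image Finset.univ c
    ⟨⟨0, hn⟩, Finset.mem_univ _⟩
  refine ⟨c j0, ⟨fun j => if j = j0 then 1 else 0, ⟨fun j => by positivity, by simp⟩, ?_⟩, ?_⟩
  · rw [payoffR_eq]
    simp [mul_ite]
    rfl
  · rintro t ⟨q, ⟨hq0, hq1⟩, rfl⟩
    rw [payoffR_eq]
    calc ∑ j, c j * q j ≤ ∑ j, c j0 * q j := by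
          refine Finset.sum_le_sum fun j _ => ?_
          exact mul_le_mul_of_nonneg_right (hj0 j (Finset.mem_univ j)) (hq0 j)
      _ = c j0 := by rw [← Finset.mul_sum, hq1, mul_one]

lemma VIR_eq_Iic {m n : ℕ} (hn : 0 < n) (g : Fin m → Fin n → ℝ) (p : Fin m → ℝ) :
    VIR g p = Set.Iic (sSup (vIR g p)) := by
  obtain ⟨t, ht⟩ := vIR_isGreatest hn g p
  rw [ht.csSup_eq]
  ext y
  constructor
  · rintro ⟨z, hz, hyz⟩
    exact hyz.trans (ht.2 hz)
  · intro hy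
    exact ⟨t, ht.1, hy⟩

theorem stmt15 {m n : ℕ} (hm : 0 < m) (hn : 0 < n)
    (g : Fin m → Fin n → ℝ) (pbar : Fin m → ℝ) (hpbar : pbar ∈ simplex m)
    (hmin : MinimalStratR g pbar) :
    sSup (vIR g pbar) = sInf {s : ℝ | ∃ p ∈ simplex m, s = sSup (vIR g p)} ∧
    VIR g pbar = Set.Iic (sInf {s : ℝ | ∃ p ∈ simplex m, s = sSup (vIR g p)}) := by
  set b := sSup (vIR g pbar) with hb
  have hleast : IsLeast {s : ℝ | ∃ p ∈ simplex m, s = sSup (vIR g p)} b := by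
    constructor
    · exact ⟨pbar, hpbar, rfl⟩
    · rintro s ⟨p, hp, rfl⟩
      by_contra hlt
      push_neg at hlt
      have hsub : VIR g p ⊆ VIR g pbar := by
        rw [VIR_eq_Iic hn, VIR_eq_Iic hn]
        exact Set.Iic_subset_Iic.mpr hlt.le
      have heq := hmin p hp hsub
      rw [VIR_eq_Iic hn, VIR_eq_Iic hn] at heq
      exact absurd (Set.Iic_injective heq) hlt.ne
  have h1 : b = sInf {s : ℝ | ∃ p ∈ simplex m, s = sSup (vIR g p)} :=
    (hleast.csInf_eq).symm
  exact ⟨h1, by rw [← h1]; exact VIR_eq_Iic hn g pbar⟩
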